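/- Let k ≥ 2, l ≥ 3, and n be positive integers such that F_l^k exactly divides F_n. Then l * F_l^(k-2) ≤ n, and consequently log(l) + (k-2)(l-2) log(φ) ≤ log(n), where φ = (1+√5)/2. -/

import Mathlib

open Real Finset

namespace FibKey


def M : Matrix (Fin 2) (Fin 2) ℕ := !![1, 1; 1, 0]

lemma M_mul_M : M * M = M + 1 := by
  ext i j
  fin_cases i <;> fin_cases j <;>
    simp [M, Matrix.mul_apply, Fin.sum_univ_two, Matrix.one_apply]

lemma M_pow_entries (i : ℕ) :
    (M ^ i) 0 0 = Nat.fib (i + 1) ∧ (M ^ i) 0 1 = Nat.fib i := by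
  induction i with
  | zero => simp [Matrix.one_apply]
  | succ i ih =>
    obtain ⟨h0, h1⟩ := ih
    constructor
    · rw [pow_succ, Matrix.mul_apply, Fin.sum_univ_two, h0, h1]
      simp [M, Nat.fib_add_two]
      ring
    · rw [pow_succ, Matrix.mul_apply, Fin.sum_univ_two, h0, h1]
      simp [M]

lemma M_pow_succ (m : ℕ) : M ^ (m + 1) = Nat.fib (m + 1) • M + Nat.fib m • 1 := by
  induction m with
  | zero => simp
  | succ m ih =>
    rw [pow_succ, ih, add_mul, smul_mul_assoc, smul_mul_assoc, M_mul_M, one_mul,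
      smul_add, Nat.fib_add_two]
    ext i j
    simp [add_smul]
    ring

lemma fib_mul_eq_sum (m a : ℕ) :
    Nat.fib ((m + 1) * a) =
      ∑ i ∈ range (a + 1),
        a.choose i * (Nat.fib (m + 1) ^ i * Nat.fib m ^ (a - i) * Nat.fib i) := by
  have h := (M_pow_entries ((m + 1) * a)).2
  rw [pow_mul, M_pow_succ] at h
  have hc : Commute (Nat.fib (m + 1) • M) (Nat.fib m • (1 : Matrix (Fin 2) (Fin 2) ℕ)) :=
    ((Commute.one_right _).smul_right _)
  rw [hc.add_pow] at h
  rw [← h, Matrix.sum_apply]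
  apply Finset.sum_congr rfl
  intro i hi
  rw [smul_pow, smul_pow, one_pow, smul_mul_assoc, mul_smul_comm, smul_mul_assoc, mul_one]
  have hcast : (M ^ i) * ((a.choose i : ℕ) : Matrix (Fin 2) (Fin 2) ℕ) = (a.choose i) • M ^ i := by
    rw [← (Nat.cast_commute (a.choose i) (M ^ i)).eq, nsmul_eq_mul]
  rw [smul_mul_assoc, hcast]
  simp only [Matrix.smul_apply, (M_pow_entries i).2, smul_eq_mul]
  ring



lemma choose_factorization_le {p : ℕ} (a i : ℕ) (hi : 1 ≤ i) (hia : i ≤ a) :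
    a.factorization p ≤ i.factorization p + (a.choose i).factorization p := by
  have ha : 1 ≤ a := le_trans hi hia
  have key : a * (a - 1).choose (i - 1) = a.choose i * i := by
    have := Nat.add_one_mul_choose_eq (a - 1) (i - 1)
    rwa [Nat.sub_add_cancel ha,
      Nat.sub_add_cancel hi] at this
  have hc1 : (a - 1).choose (i - 1) ≠ 0 :=
    (Nat.choose_pos (by omega)).ne'
  have hc2 : a.choose i ≠ 0 := (Nat.choose_pos hia).ne'
  have hfac := congrArg (fun x => x.factorization p) key
  simp only [Nat.factorization_mul (by omega : a ≠ 0) hc1,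
    Nat.factorization_mul hc2 (by omega : i ≠ 0), Finsupp.add_apply] at hfac
  omega

lemma pow_val_le {p i : ℕ} (hp : 2 ≤ p) (hi : 1 ≤ i) : p ^ i.factorization p ≤ i :=
  Nat.le_of_dvd hi (Nat.ordProj_dvd i p)

lemma val_le_sub_one {p i : ℕ} (hp : 2 ≤ p) (hi : 2 ≤ i) : i.factorization p ≤ i - 1 := by
  set v := i.factorization p with hv
  have h1 : p ^ v ≤ i := pow_val_le hp (by omega)
  have h2 : v < 2 ^ v := Nat.lt_pow_self (by norm_num)
  have h3 : (2:ℕ) ^ v ≤ p ^ v := Nat.pow_le_pow_left hp v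
  omega

lemma val_le_sub_two {p i : ℕ} (hp : 3 ≤ p) (hi : 2 ≤ i) : i.factorization p ≤ i - 2 := by
  set v := i.factorization p with hv
  rcases Nat.eq_zero_or_pos v with h | h
  · omega
  · have h1 : p ^ v ≤ i := pow_val_le (by omega) (by omega)
    have h2 : (3:ℕ) ^ v ≤ p ^ v := Nat.pow_le_pow_left hp v
    have h3 : v - 1 < 3 ^ (v - 1) := Nat.lt_pow_self (by norm_num)
    have h4 : 3 ^ v = 3 * 3 ^ (v - 1) := by
      rw [← pow_succ']
      congr 1
      omega
    omega




lemma exact_val {p : ℕ} (hp : p.Prime) (m a : ℕ) (ha : 1 ≤ a)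
    (hs : 1 ≤ (Nat.fib (m + 1)).factorization p)
    (hcond : ∀ i, 2 ≤ i → i ≤ a →
      (Nat.fib (m + 1)).factorization p + a.factorization p + 1 ≤
        (a.choose i).factorization p + i * (Nat.fib (m + 1)).factorization p
          + (Nat.fib i).factorization p) :
    (Nat.fib ((m + 1) * a)).factorization p
      = (Nat.fib (m + 1)).factorization p + a.factorization p := by
  set d := Nat.fib (m + 1) with hd
  set g := Nat.fib m with hg
  set s := d.factorization p with hsdef
  set v := s + a.factorization p with hvdef
  have hd0 : d ≠ 0 := (Nat.fib_pos.mpr (by omega)).ne'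
  have ha0 : a ≠ 0 := by omega
  have hpd : p ∣ d := by
    by_contra hcon
    have := Nat.factorization_eq_zero_of_not_dvd hcon
    omega
  have hpg : ¬ p ∣ g := by
    intro hcon
    have h1 : p ∣ Nat.gcd g d := Nat.dvd_gcd hcon hpd
    rw [Nat.Coprime.gcd_eq_one (Nat.fib_coprime_fib_succ m)] at h1
    exact hp.one_lt.ne' (Nat.eq_one_of_dvd_one h1)
  have hgne : g ≠ 0 := fun hc => hpg (hc ▸ dvd_zero p)
  have hvg : g.factorization p = 0 := Nat.factorization_eq_zero_of_not_dvd hpg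
  -- split the sum
  have hsum := fib_mul_eq_sum m a
  set F : ℕ → ℕ := fun i => a.choose i * (d ^ i * g ^ (a - i) * Nat.fib i) with hF
  have hsplit : ∑ i ∈ range (a + 1), F i = F 0 + F 1 + ∑ i ∈ Ico 2 (a + 1), F i := by
    rw [Finset.range_eq_Ico, Finset.sum_eq_sum_Ico_succ_bot (by omega),
      Finset.sum_eq_sum_Ico_succ_bot (by omega)]
    ring
  have hF0 : F 0 = 0 := by simp [hF]
  have hF1 : F 1 = a * (d * g ^ (a - 1)) := by simp [hF]
  set R := ∑ i ∈ Ico 2 (a + 1), F i with hR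
  have heq : Nat.fib ((m + 1) * a) = a * (d * g ^ (a - 1)) + R := by
    rw [hsum, hsplit, hF0, hF1, zero_add]
  -- t1 facts
  have hgpow0 : g ^ (a - 1) ≠ 0 := pow_ne_zero _ hgne
  have ht1ne : a * (d * g ^ (a - 1)) ≠ 0 := mul_ne_zero ha0 (mul_ne_zero hd0 hgpow0)
  have ht1 : (a * (d * g ^ (a - 1))).factorization p = v := by
    rw [Nat.factorization_mul ha0 (mul_ne_zero hd0 hgpow0),
      Nat.factorization_mul hd0 hgpow0, Nat.factorization_pow]
    simp [hvg, hvdef]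
    omega
  -- R divisible by p^(v+1)
  have hRdvd : p ^ (v + 1) ∣ R := by
    apply Finset.dvd_sum
    intro i hi
    rw [Finset.mem_Ico] at hi
    obtain ⟨hi2, hia⟩ := hi
    have hia' : i ≤ a := by omega
    have hFine : F i ≠ 0 := by
      have h1 : a.choose i ≠ 0 := (Nat.choose_pos hia').ne'
      have h2 : Nat.fib i ≠ 0 := (Nat.fib_pos.mpr (by omega)).ne'
      simp only [hF]
      exact mul_ne_zero h1 (mul_ne_zero (mul_ne_zero (pow_ne_zero _ hd0) (pow_ne_zero _ hgne)) h2)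
    rw [hp.pow_dvd_iff_le_factorization hFine]
    simp only [hF]
    rw [Nat.factorization_mul (Nat.choose_pos hia').ne'
        (mul_ne_zero (mul_ne_zero (pow_ne_zero _ hd0) (pow_ne_zero _ hgne))
          ((Nat.fib_pos.mpr (by omega : 0 < i)).ne')),
      Nat.factorization_mul (mul_ne_zero (pow_ne_zero _ hd0) (pow_ne_zero _ hgne))
        ((Nat.fib_pos.mpr (by omega : 0 < i)).ne'),
      Nat.factorization_mul (pow_ne_zero _ hd0) (pow_ne_zero _ hgne),
      Nat.factorization_pow, Nat.factorization_pow]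
    have hco := hcond i hi2 hia'
    simp only [Finsupp.coe_add, Pi.add_apply, Finsupp.smul_apply, hvg, smul_eq_mul,
      mul_zero, add_zero, ← hsdef]
    omega
  -- conclude
  have hfibne : Nat.fib ((m + 1) * a) ≠ 0 := by
    have : 0 < (m + 1) * a := by positivity
    exact (Nat.fib_pos.mpr this).ne'
  have hdvdv : p ^ v ∣ Nat.fib ((m + 1) * a) := by
    rw [heq]
    refine dvd_add ?_ (dvd_trans (pow_dvd_pow p (Nat.le_succ v)) hRdvd)
    exact (hp.pow_dvd_iff_le_factorization ht1ne).mpr (le_of_eq ht1.symm)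
  have hnotdvd : ¬ p ^ (v + 1) ∣ Nat.fib ((m + 1) * a) := by
    intro hcon2
    have hsub : p ^ (v + 1) ∣ a * (d * g ^ (a - 1)) := by
      have h3 := Nat.dvd_sub hcon2 hRdvd
      rwa [heq, Nat.add_sub_cancel] at h3
    rw [hp.pow_dvd_iff_le_factorization ht1ne, ht1] at hsub
    omega
  rw [hp.pow_dvd_iff_le_factorization hfibne] at hdvdv
  rw [hp.pow_dvd_iff_le_factorization hfibne] at hnotdvd
  omega







lemma index_dvd_of_fib_dvd {l n : ℕ} (hl2 : 2 ≤ Nat.fib l) (hdvd : Nat.fib l ∣ Nat.fib n) :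
    l ∣ n := by
  have hl0 : l ≠ 0 := by
    intro hc; rw [hc] at hl2; simp [Nat.fib_zero] at hl2
  have hgcd : Nat.fib (Nat.gcd l n) = Nat.fib l := by
    rw [Nat.fib_gcd, Nat.gcd_eq_left hdvd]
  have hg3 : 3 ≤ Nat.gcd l n := by
    by_contra hc
    push_neg at hc
    have h1 : Nat.fib (Nat.gcd l n) ≤ 1 := by
      have h2 : Nat.gcd l n ≤ 2 := by omega
      calc Nat.fib (Nat.gcd l n) ≤ Nat.fib 2 := Nat.fib_mono h2
        _ = 1 := rfl
    omega
  have hgl : Nat.gcd l n ≤ l := Nat.le_of_dvd (by omega) (Nat.gcd_dvd_left l n)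
  have : Nat.gcd l n = l := by
    rcases lt_or_eq_of_le hgl with h | h
    · exfalso
      have := (Nat.fib_lt_fib (by omega : 2 ≤ Nat.gcd l n)).mpr h
      omega
    · exact h
  rw [← this]
  exact Nat.gcd_dvd_right l n

-- discharge hcond in the three scenarios
lemma cond_of {p : ℕ} (hp : p.Prime) (s νa νc νf i : ℕ) (hs : 1 ≤ s) (hi : 2 ≤ i)
    (hvc : νa ≤ i.factorization p + νc)
    (hcase : 3 ≤ p ∨ 3 ≤ s ∨ νa = 0) :
    s + νa + 1 ≤ νc + i * s + νf := by
  have E2 : i * s = (i - 1) * s + s := by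
    have h : i = (i - 1) + 1 := by omega
    calc i * s = ((i - 1) + 1) * s := by rw [← h]
      _ = (i - 1) * s + s := by ring
  rcases hcase with h3 | h3 | h3
  · have hνi : i.factorization p ≤ i - 2 := val_le_sub_two h3 hi
    have E1 : (i - 1) * 1 ≤ (i - 1) * s := Nat.mul_le_mul_left _ hs
    omega
  · have hνi : i.factorization p ≤ i - 1 := val_le_sub_one hp.two_le hi
    have E1 : (i - 1) * 3 ≤ (i - 1) * s := Nat.mul_le_mul_left _ h3
    omega
  · have hνi : i.factorization p ≤ i - 1 := val_le_sub_one hp.two_le hi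
    have E1 : (i - 1) * 1 ≤ (i - 1) * s := Nat.mul_le_mul_left _ hs
    omega


theorem key_dvd (k l n : ℕ) (hk : 2 ≤ k) (hl : 3 ≤ l) (hn : 1 ≤ n)
    (hdvd : Nat.fib l ^ k ∣ Nat.fib n) : l * Nat.fib l ^ (k - 2) ∣ n := by
  set d := Nat.fib l with hd
  have hd2 : 2 ≤ d := by
    calc (2:ℕ) = Nat.fib 3 := rfl
      _ ≤ d := Nat.fib_mono hl
  have hfl_dvd : d ∣ Nat.fib n := by
    calc d = d ^ 1 := (pow_one d).symm
      _ ∣ d ^ k := pow_dvd_pow d (by omega)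
      _ ∣ Nat.fib n := hdvd
  have hln : l ∣ n := index_dvd_of_fib_dvd hd2 hfl_dvd
  obtain ⟨a, hna⟩ := hln
  have ha : 1 ≤ a := by
    rcases Nat.eq_zero_or_pos a with h | h
    · subst h; simp at hna; omega
    · exact h
  have ha0 : a ≠ 0 := by omega
  have hfibn0 : Nat.fib n ≠ 0 := (Nat.fib_pos.mpr (by omega)).ne'
  suffices hsuf : d ^ (k - 2) ∣ a by
    rw [hna]; exact mul_dvd_mul_left l hsuf
  rw [← Nat.factorization_le_iff_dvd (pow_ne_zero _ (by omega)) ha0, Finsupp.le_def]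
  intro p
  rw [Nat.factorization_pow, Finsupp.smul_apply, smul_eq_mul]
  by_cases hp : p.Prime
  swap
  · rw [Nat.factorization_eq_zero_of_not_prime d hp]
    simp
  set s := d.factorization p with hsdef
  rcases Nat.eq_zero_or_pos s with hs0 | hs1
  · rw [hs0]; simp
  -- p^ (k*s) divides fib n
  have hks : k * s ≤ (Nat.fib n).factorization p := by
    rw [← hp.pow_dvd_iff_le_factorization hfibn0]
    calc p ^ (k * s) = (p ^ s) ^ k := by rw [← pow_mul, mul_comm]
      _ ∣ d ^ k := pow_dvd_pow_of_dvd (Nat.ordProj_dvd d p) k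
      _ ∣ Nat.fib n := hdvd
  have hks2 : 2 ≤ k * s := by
    have := Nat.mul_le_mul hk hs1
    simpa using this
  have hml : l = (l - 1) + 1 := by omega
  by_cases hcase : 3 ≤ p ∨ 3 ≤ s
  · -- clean case via exact_val with base l
    have hexact : (Nat.fib n).factorization p = s + a.factorization p := by
      have h1 := exact_val hp (l - 1) a ha (by rw [← hml, ← hd, ← hsdef]; omega)
        (fun i hi2 hia => by
          rw [← hml, ← hd, ← hsdef]
          exact cond_of hp s (a.factorization p) ((a.choose i).factorization p)
            ((Nat.fib i).factorization p) i hs1 hi2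
            (choose_factorization_le a i (by omega) hia)
            (by tauto))
      rw [← hml, ← hd, ← hsdef] at h1
      rw [hna, h1]
    have E1 : (k - 2) * s ≤ (k - 1) * s := Nat.mul_le_mul_right _ (by omega)
    have E2 : k * s = (k - 1) * s + s := by
      have h : k = (k - 1) + 1 := by omega
      calc k * s = ((k - 1) + 1) * s := by rw [← h]
        _ = (k - 1) * s + s := by ring
    omega
  · -- p = 2, s ≤ 2
    push_neg at hcase
    obtain ⟨hple, hsle⟩ := hcase
    have hp2 : p = 2 := by
      have := hp.two_le; omega
    subst hp2
    have hsle2 : s ≤ 2 := by omega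
    -- 2 ∣ fib n, so 3 ∣ n
    have h2fib : (2:ℕ) ∣ Nat.fib n := by
      apply Nat.dvd_of_factorization_pos
      omega
    have h3n : 3 ∣ n := index_dvd_of_fib_dvd (le_refl 2) (by exact h2fib)
    obtain ⟨b, hnb⟩ := h3n
    have hb0 : b ≠ 0 := by
      intro hc; rw [hc, mul_zero] at hnb; omega
    -- b must be even
    have hbeven : 2 ∣ b := by
      by_contra hodd
      have hfib3 : (Nat.fib (2 + 1)).factorization 2 = 1 := by
        norm_num [Nat.Prime.factorization_self Nat.prime_two]
      have h1 := exact_val Nat.prime_two 2 b (by omega) hfib3.ge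
        (fun i hi2 hib => by
          rw [hfib3]
          exact cond_of Nat.prime_two 1 (b.factorization 2) ((b.choose i).factorization 2)
            ((Nat.fib i).factorization 2) i (le_refl 1) hi2
            (choose_factorization_le b i (by omega) hib)
            (Or.inr (Or.inr (Nat.factorization_eq_zero_of_not_dvd hodd))))
      rw [show (2:ℕ) + 1 = 3 from rfl, ← hnb, hfib3,
        Nat.factorization_eq_zero_of_not_dvd hodd] at h1
      omega
    obtain ⟨c, hbc⟩ := hbeven
    have hc0 : c ≠ 0 := by
      intro hcc; rw [hcc, mul_zero] at hbc; omega
    have hn6 : n = 6 * c := by omega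
    have hfib6 : (Nat.fib (5 + 1)).factorization 2 = 3 := by
      show (Nat.fib 6).factorization 2 = 3
      rw [show Nat.fib 6 = 2 ^ 3 from rfl, Nat.Prime.factorization_pow Nat.prime_two]
      simp
    have h6 := exact_val Nat.prime_two 5 c (by omega) (by rw [hfib6]; omega)
      (fun i hi2 hic => by
        rw [hfib6]
        exact cond_of Nat.prime_two 3 (c.factorization 2) ((c.choose i).factorization 2)
          ((Nat.fib i).factorization 2) i (by omega) hi2
          (choose_factorization_le c i (by omega) hic)
          (Or.inr (Or.inl (le_refl 3))))
    rw [show (5:ℕ) + 1 = 6 from rfl, ← hn6, hfib6] at h6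
    -- l is odd
    have hlodd : ¬ (2:ℕ) ∣ l := by
      intro h2l
      have h2d : (2:ℕ) ∣ d := Nat.dvd_of_factorization_pos (by omega)
      have h3l : (3:ℕ) ∣ l := index_dvd_of_fib_dvd (le_refl 2) (by exact h2d)
      have h6l : (6:ℕ) ∣ l := Nat.Coprime.mul_dvd_of_dvd_of_dvd (by norm_num) h2l h3l
      have h8d : (8:ℕ) ∣ d := by
        calc (8:ℕ) = Nat.fib 6 := rfl
          _ ∣ d := Nat.fib_dvd 6 l h6l
      have : 3 ≤ s := by
        rw [hsdef, ← Nat.Prime.pow_dvd_iff_le_factorization Nat.prime_two (by omega)]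
        exact h8d
      omega
    -- ν₂ a = ν₂ n = 1 + ν₂ c
    have hvl : l.factorization 2 = 0 := Nat.factorization_eq_zero_of_not_dvd hlodd
    have hva : n.factorization 2 = a.factorization 2 := by
      rw [hna, Nat.factorization_mul (by omega) ha0]
      simp [hvl]
    have hvn : n.factorization 2 = 1 + c.factorization 2 := by
      rw [hn6, show (6:ℕ) = 2 * 3 by norm_num, mul_assoc,
        Nat.factorization_mul (by norm_num) (mul_ne_zero (by norm_num) hc0),
        Nat.factorization_mul (by norm_num) hc0]
      simp [Nat.Prime.factorization_self Nat.prime_two,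
        Nat.factorization_eq_zero_of_not_dvd (by norm_num : ¬ (2:ℕ) ∣ 3)]
    have E2 : k * s = (k - 2) * s + 2 * s := by
      have h : k = (k - 2) + 2 := by omega
      calc k * s = ((k - 2) + 2) * s := by rw [← h]
        _ = (k - 2) * s + 2 * s := by ring
    omega



lemma gold_pow_le_fib : ∀ j : ℕ, goldenRatio ^ j ≤ (Nat.fib (j + 2) : ℝ)
  | 0 => by norm_num
  | 1 => by
    rw [pow_one]
    have h := goldenRatio_lt_two
    have : (Nat.fib 3 : ℝ) = 2 := by norm_num
    rw [show (1:ℕ) + 2 = 3 from rfl, this]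
    linarith
  | (j + 2) => by
    have h1 := gold_pow_le_fib j
    have h2 := gold_pow_le_fib (j + 1)
    have h3 := goldenRatio_pow_sub_goldenRatio_pow j
    have hf : (Nat.fib (j + 2 + 2) : ℝ) = Nat.fib (j + 1 + 2) + Nat.fib (j + 2) := by
      rw [Nat.fib_add_two]
      push_cast
      ring_nf
    rw [hf]
    linarith


end FibKey



theorem mul_fib_pow_le_and_log_ineq (k l n : ℕ)
    (hk : 2 ≤ k) (hl : 3 ≤ l) (hn : 1 ≤ n)
    (hdvd : Nat.fib l ^ k ∣ Nat.fib n) (hndvd : ¬ Nat.fib l ^ (k + 1) ∣ Nat.fib n) :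
    l * Nat.fib l ^ (k - 2) ≤ n ∧
      Real.log l + ((k : ℝ) - 2) * ((l : ℝ) - 2) * Real.log goldenRatio ≤ Real.log n := by
  have hdvd2 := FibKey.key_dvd k l n hk hl hn hdvd
  have h1 : l * Nat.fib l ^ (k - 2) ≤ n := Nat.le_of_dvd (by omega) hdvd2
  refine ⟨h1, ?_⟩
  have hfibpos : (0:ℝ) < (Nat.fib l : ℝ) := by
    have : 0 < Nat.fib l := Nat.fib_pos.mpr (by omega)
    exact_mod_cast this
  have hl0 : (0:ℝ) < (l:ℝ) := by exact_mod_cast (by omega : 0 < l)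
  have hgold : goldenRatio ^ (l - 2) ≤ (Nat.fib l : ℝ) := by
    have h := FibKey.gold_pow_le_fib (l - 2)
    rwa [show l - 2 + 2 = l by omega] at h
  have hlog1 : ((l:ℝ) - 2) * Real.log goldenRatio ≤ Real.log (Nat.fib l) := by
    have hc : ((l - 2 : ℕ) : ℝ) = (l:ℝ) - 2 := by
      push_cast [Nat.cast_sub (by omega : 2 ≤ l)]
      ring
    calc ((l:ℝ) - 2) * Real.log goldenRatio = ((l - 2 : ℕ) : ℝ) * Real.log goldenRatio := by
          rw [hc]
      _ = Real.log (goldenRatio ^ (l - 2)) := (Real.log_pow _ _).symm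
      _ ≤ Real.log (Nat.fib l) := Real.log_le_log (by positivity) hgold
  have hcast : ((l * Nat.fib l ^ (k - 2) : ℕ) : ℝ) = (l:ℝ) * (Nat.fib l : ℝ) ^ (k - 2) := by
    push_cast
    ring
  have hmain : Real.log ((l:ℝ) * (Nat.fib l : ℝ) ^ (k - 2)) ≤ Real.log n := by
    rw [← hcast]
    apply Real.log_le_log
    · rw [hcast]; positivity
    · exact_mod_cast h1
  rw [Real.log_mul (by positivity) (by positivity), Real.log_pow] at hmain
  have hck : ((k - 2 : ℕ) : ℝ) = (k:ℝ) - 2 := by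
    push_cast [Nat.cast_sub (by omega : 2 ≤ k)]
    ring
  rw [hck] at hmain
  have hk2 : (0:ℝ) ≤ (k:ℝ) - 2 := by
    have : (2:ℝ) ≤ (k:ℝ) := by exact_mod_cast hk
    linarith
  have hfinal : ((k:ℝ) - 2) * (((l:ℝ) - 2) * Real.log goldenRatio) ≤
      ((k:ℝ) - 2) * Real.log (Nat.fib l) := mul_le_mul_of_nonneg_left hlog1 hk2
  calc Real.log l + ((k:ℝ) - 2) * ((l:ℝ) - 2) * Real.log goldenRatio
      = Real.log l + ((k:ℝ) - 2) * (((l:ℝ) - 2) * Real.log goldenRatio) := by ring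
    _ ≤ Real.log l + ((k:ℝ) - 2) * Real.log (Nat.fib l) := by linarith
    _ ≤ Real.log n := hmain
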